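/- Let f : ℕ → ℝ be an arithmetic function with f(m) ≥ 0 for all m ≥ 1 and f(m) > 0 for all m ≥ 2, and suppose that the map n ↦ f(n)/n is nondecreasing on the integers n ≥ 2 (with respect to the usual order). Then for every real x ≥ 0, the product over all primes p of p^⌊x/f(p)⌋ equals the least common multiple of the set of all products i₁·i₂⋯i_k where k ∈ ℕ and i₁, …, i_k are positive integers satisfying f(i₁) + f(i₂) + ⋯ + f(i_k) ≤ x. -/

import Mathlib

/-- Key bound: `v_p(n) * f p ≤ f n` for positive `n` and prime `p`. -/
lemma key_factorization_bound (f : ℕ → ℝ)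
    (hf0 : ∀ m : ℕ, 1 ≤ m → 0 ≤ f m)
    (hf1 : ∀ m : ℕ, 2 ≤ m → 0 < f m)
    (hmono : ∀ m n : ℕ, 2 ≤ m → m ≤ n → f m / m ≤ f n / n)
    (p n : ℕ) (hp : p.Prime) (hn : 0 < n) :
    (n.factorization p : ℝ) * f p ≤ f n := by
  set e := n.factorization p with he
  rcases Nat.eq_zero_or_pos e with h0 | hpos
  · rw [h0]
    simpa using hf0 n hn
  · have hpe : p ^ e ∣ n := Nat.ordProj_dvd n p
    have hpen : p ^ e ≤ n := Nat.le_of_dvd hn hpe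
    have hpn : p ≤ n := le_trans (Nat.le_self_pow hpos.ne' p) hpen
    have hfp : 0 < f p := hf1 p hp.two_le
    have hp0 : (0 : ℝ) < (p : ℝ) := by exact_mod_cast hp.pos
    have h1 : f p / p ≤ f n / n := hmono p n hp.two_le hpn
    -- e ≤ p ^ (e - 1)
    have h2 : e ≤ p ^ (e - 1) := by
      have h21 : e - 1 < 2 ^ (e - 1) := Nat.lt_two_pow_self
      have h22 : 2 ^ (e - 1) ≤ p ^ (e - 1) := Nat.pow_le_pow_left hp.two_le _
      omega
    have h2' : (e : ℝ) ≤ (p : ℝ) ^ (e - 1) := by exact_mod_cast h2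
    have h3 : (p : ℝ) ^ (e - 1) * (p : ℝ) = (p : ℝ) ^ e := by
      rw [← pow_succ]
      congr 1
      omega
    have h4 : ((p : ℝ) ^ e) ≤ (n : ℝ) := by exact_mod_cast hpen
    have hn0 : (0 : ℝ) < (n : ℝ) := by exact_mod_cast hn
    calc (e : ℝ) * f p ≤ (p : ℝ) ^ (e - 1) * f p := by
          exact mul_le_mul_of_nonneg_right h2' hfp.le
      _ = (p : ℝ) ^ e * (f p / p) := by
          rw [← h3]; field_simp
      _ ≤ (n : ℝ) * (f p / p) := by
          exact mul_le_mul_of_nonneg_right h4 (div_nonneg hfp.le hp0.le)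
      _ ≤ (n : ℝ) * (f n / n) := by
          exact mul_le_mul_of_nonneg_left h1 hn0.le
      _ = f n := by field_simp

theorem prod_primes_eq_lcm_of_div_self_mono (f : ℕ → ℝ)
    (hf0 : ∀ m : ℕ, 1 ≤ m → 0 ≤ f m)
    (hf1 : ∀ m : ℕ, 2 ≤ m → 0 < f m)
    (hmono : ∀ m n : ℕ, 2 ≤ m → m ≤ n → f m / m ≤ f n / n)
    (x : ℝ) (hx : 0 ≤ x) :
    (∀ (k : ℕ) (i : Fin k → ℕ), (∀ j, 0 < i j) → (∑ j, f (i j)) ≤ x →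
        (∏ j, i j) ∣ ∏ᶠ p ∈ {p : ℕ | p.Prime}, p ^ ⌊x / f p⌋₊) ∧
    (∀ N : ℕ, (∀ (k : ℕ) (i : Fin k → ℕ), (∀ j, 0 < i j) → (∑ j, f (i j)) ≤ x →
        (∏ j, i j) ∣ N) →
      (∏ᶠ p ∈ {p : ℕ | p.Prime}, p ^ ⌊x / f p⌋₊) ∣ N) := by
  have hf2 : 0 < f 2 := hf1 2 le_rfl
  set g : ℕ → ℕ := fun p => p ^ ⌊x / f p⌋₊ with hg
  -- finiteness of the support
  have hfin : ({p : ℕ | p.Prime} ∩ Function.mulSupport g).Finite := by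
    apply Set.Finite.subset (Set.finite_Iic ⌊2 * x / f 2⌋₊)
    rintro p ⟨hp, hps⟩
    have hp2 : 2 ≤ p := hp.two_le
    have hfp : 0 < f p := hf1 p hp2
    have h1 : 1 ≤ ⌊x / f p⌋₊ := by
      by_contra h
      push_neg at h
      have : ⌊x / f p⌋₊ = 0 := by omega
      exact hps (by simp [hg, this])
    have hfl : f p ≤ x := by
      have := (Nat.one_le_floor_iff _).mp h1
      exact (one_le_div hfp).mp (by exact_mod_cast this)
    have hmp : f 2 / 2 ≤ f p / p := hmono 2 p le_rfl hp2
    have hp0 : (0 : ℝ) < (p : ℝ) := by exact_mod_cast hp.pos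
    have h2 : (p : ℝ) * (f 2 / 2) ≤ f p := by
      calc (p : ℝ) * (f 2 / 2) ≤ (p : ℝ) * (f p / p) :=
            mul_le_mul_of_nonneg_left hmp hp0.le
        _ = f p := by field_simp
    have hple : (p : ℝ) ≤ 2 * x / f 2 := by
      rw [le_div_iff₀ hf2]
      nlinarith
    exact Set.mem_Iic.mpr (Nat.le_floor hple)
  have hprod : (∏ᶠ p ∈ {p : ℕ | p.Prime}, p ^ ⌊x / f p⌋₊) = ∏ p ∈ hfin.toFinset, g p :=
    finprod_mem_eq_prod g hfin
  have hmemS : ∀ p ∈ hfin.toFinset, p.Prime := by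
    intro p hps
    exact (hfin.mem_toFinset.mp hps).1
  have hP0 : 0 < ∏ p ∈ hfin.toFinset, g p := by
    apply Finset.prod_pos
    intro p hps
    exact pow_pos (hmemS p hps).pos _
  constructor
  · -- every admissible product divides P
    intro k i hi hsum
    rw [hprod]
    have hprodpos : 0 < ∏ j, i j := Finset.prod_pos (fun j _ => hi j)
    rw [← Nat.factorization_le_iff_dvd hprodpos.ne' hP0.ne']
    intro p
    by_cases hp : p.Prime
    · have hfp : 0 < f p := hf1 p hp.two_le
      -- sum of valuations
      have hvs : (∏ j, i j).factorization p = ∑ j, (i j).factorization p := by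
        rw [Nat.factorization_prod (fun j _ => (hi j).ne')]
        simp [Finsupp.finset_sum_apply]
      have hkey : ∀ j, ((i j).factorization p : ℝ) * f p ≤ f (i j) := fun j =>
        key_factorization_bound f hf0 hf1 hmono p (i j) hp (hi j)
      have hsle : ((∑ j, (i j).factorization p : ℕ) : ℝ) * f p ≤ x := by
        push_cast
        rw [Finset.sum_mul]
        exact le_trans (Finset.sum_le_sum fun j _ => hkey j) hsum
      have hfloor : (∑ j, (i j).factorization p) ≤ ⌊x / f p⌋₊ := by
        apply Nat.le_floor
        rw [le_div_iff₀ hfp]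
        exact hsle
      rw [hvs]
      refine le_trans hfloor ?_
      -- ⌊x / f p⌋₊ ≤ P.factorization p
      rcases Nat.eq_zero_or_pos ⌊x / f p⌋₊ with h0 | hpos
      · simp [h0]
      · have hpmem : p ∈ hfin.toFinset := by
          rw [hfin.mem_toFinset]
          refine ⟨hp, ?_⟩
          simp only [Function.mem_mulSupport, hg]
          intro hone
          have := Nat.one_lt_pow hpos.ne' hp.one_lt
          omega
        have hdvdP : p ^ ⌊x / f p⌋₊ ∣ ∏ q ∈ hfin.toFinset, g q := by
          exact Finset.dvd_prod_of_mem g hpmem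
        exact (Nat.Prime.pow_dvd_iff_le_factorization hp hP0.ne').mp hdvdP
    · simp [Nat.factorization_eq_zero_of_not_prime _ hp]
  · -- P divides any common multiple N
    intro N hN
    rcases Nat.eq_zero_or_pos N with rfl | hNpos
    · exact dvd_zero _
    have hdvd : ∀ p ∈ hfin.toFinset, g p ∣ N := by
      intro p hps
      have hp := hmemS p hps
      have hfp : 0 < f p := hf1 p hp.two_le
      have := hN ⌊x / f p⌋₊ (fun _ => p) (fun _ => hp.pos) ?_
      · simpa using this
      · simp only [Finset.sum_const, Finset.card_univ, Fintype.card_fin, nsmul_eq_mul]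
        have h1 : (⌊x / f p⌋₊ : ℝ) ≤ x / f p := Nat.floor_le (div_nonneg hx hfp.le)
        calc (⌊x / f p⌋₊ : ℝ) * f p ≤ (x / f p) * f p :=
              mul_le_mul_of_nonneg_right h1 hfp.le
          _ = x := by field_simp
    rw [hprod, ← Nat.factorization_le_iff_dvd hP0.ne' hNpos.ne']
    intro p
    have hPf : (∏ q ∈ hfin.toFinset, g q).factorization p
        = if p ∈ hfin.toFinset then ⌊x / f p⌋₊ else 0 := by
      rw [Nat.factorization_prod (fun q hq => (pow_pos (hmemS q hq).pos _).ne')]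
      rw [Finsupp.finset_sum_apply]
      rw [Finset.sum_congr rfl
        (fun q hq => by
          show (g q).factorization p = if q = p then ⌊x / f q⌋₊ else 0
          rw [(hmemS q hq).factorization_pow, Finsupp.single_apply])]
      exact Finset.sum_ite_eq' _ _ _
    rw [hPf]
    split_ifs with h
    · have hp := hmemS p h
      exact (hp.pow_dvd_iff_le_factorization hNpos.ne').mp (hdvd p h)
    · exact Nat.zero_le _
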